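/- arXiv:2403.09101 — 2 statements merged into one kernel-verified Lean document; each statement's English description precedes it below -/
import Mathlib

section
/- Symmetric noise risk identity: Let ℓ : X × Fin K → ℝ be a loss function depending on a classifier, and suppose for every x, Σ_{k=1}^{K} ℓ(x,k) = C for a constant C (symmetric loss condition). Under symmetric label noise with rate η (the observed label equals the true label y with probability 1−η and equals each other label with probability η/(K−1)), the noisy risk satisfies R^η(f) = (1 − ηK/(K−1))·R(f) + C·η/(K−1), where R(f) = E_{(x,y)} ℓ(x,y) and R^η(f) = E over the noisy label distribution. -/
open Real Finset

/-- Symmetric noise risk identity: if the loss is symmetric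
(∑ₖ ℓ(x,k) = C) then the noisy risk under symmetric label noise of rate η
satisfies R^η = (1 - ηK/(K-1))·R + C·η/(K-1).  The data distribution is a
finitely-supported distribution μ over samples `S`, with true label `y s`. -/
theorem symmetric_noise_risk_identity
    (K : ℕ) (hK : 2 ≤ K) (S : Type*) [Fintype S]
    (μ : S → ℝ) (hμ : ∀ s, 0 ≤ μ s) (hμs : ∑ s, μ s = 1)
    (y : S → Fin K) (ℓ : S → Fin K → ℝ) (C η : ℝ)
    (hη0 : 0 ≤ η) (hη1 : η ≤ 1)
    (hsym : ∀ s, ∑ k, ℓ s k = C) :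
    (∑ s, μ s * ((1 - η) * ℓ s (y s) +
        (η / (K - 1)) * ∑ k ∈ Finset.univ \ {y s}, ℓ s k)) =
      (1 - η * K / (K - 1)) * (∑ s, μ s * ℓ s (y s)) + C * η / (K - 1) := by
  have hK1 : (K : ℝ) - 1 ≠ 0 := by
    have : (2:ℝ) ≤ K := by exact_mod_cast hK
    linarith
  have hrep : ∀ s, ∑ k ∈ Finset.univ \ {y s}, ℓ s k = C - ℓ s (y s) := by
    intro s
    have h := Finset.sum_sdiff_eq_sub (f := ℓ s)
      (Finset.subset_univ ({y s} : Finset (Fin K)))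
    rw [h, hsym s, Finset.sum_singleton]
  calc (∑ s, μ s * ((1 - η) * ℓ s (y s) +
        (η / (K - 1)) * ∑ k ∈ Finset.univ \ {y s}, ℓ s k))
      = ∑ s, ((1 - η * K / (K - 1)) * (μ s * ℓ s (y s)) + C * η / (K - 1) * μ s) := by
        apply Finset.sum_congr rfl
        intro s _
        rw [hrep s]
        field_simp
        ring
    _ = (1 - η * K / (K - 1)) * (∑ s, μ s * ℓ s (y s)) + C * η / (K - 1) := by
        rw [Finset.sum_add_distrib, ← Finset.mul_sum, ← Finset.mul_sum, hμs, mul_one]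
end

section
/- Asymmetric noise risk decomposition: Suppose for each true label y, the noisy label equals y with probability 1 − η_y and equals each k ≠ y with probability η_{y,k} (Σ_{k≠y} η_{y,k} = η_y), and Σ_{k=1}^K ℓ(x,k) = C for all x. Then the noisy risk satisfies R^η(f) = E_{x,y}[(1−η_y)·C] − E_{x,y}[ Σ_{k≠y} (1 − η_y − η_{y,k})·ℓ(x,k) ]. -/
open Real Finset

/-- Asymmetric noise risk decomposition: with class-dependent noise rates
η_y = ∑_{k≠y} η_{y,k} and a symmetric loss ∑ₖ ℓ(x,k) = C,
R^η(f) = E[(1-η_y)·C] - E[∑_{k≠y} (1 - η_y - η_{y,k}) ℓ(x,k)]. -/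
theorem asymmetric_noise_risk_decomposition
    (K : ℕ) (hK : 2 ≤ K) (S : Type*) [Fintype S]
    (μ : S → ℝ) (hμ : ∀ s, 0 ≤ μ s) (hμs : ∑ s, μ s = 1)
    (y : S → Fin K) (ℓ : S → Fin K → ℝ) (C : ℝ)
    (ηy : Fin K → ℝ) (ηm : Fin K → Fin K → ℝ)
    (hηy0 : ∀ j, 0 ≤ ηy j) (hηy1 : ∀ j, ηy j < 1)
    (hηm0 : ∀ j k, 0 ≤ ηm j k)
    (hηsum : ∀ j, ∑ k ∈ Finset.univ \ {j}, ηm j k = ηy j)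
    (hsym : ∀ s, ∑ k, ℓ s k = C) :
    (∑ s, μ s * ((1 - ηy (y s)) * ℓ s (y s) +
        ∑ k ∈ Finset.univ \ {y s}, ηm (y s) k * ℓ s k)) =
      (∑ s, μ s * ((1 - ηy (y s)) * C)) -
        (∑ s, μ s * ∑ k ∈ Finset.univ \ {y s},
          (1 - ηy (y s) - ηm (y s) k) * ℓ s k) := by
  rw [← Finset.sum_sub_distrib]
  apply Finset.sum_congr rfl
  intro s _
  rw [← mul_sub]
  congr 1
  have hC : ℓ s (y s) + ∑ k ∈ Finset.univ \ {y s}, ℓ s k = C := by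
    rw [← hsym s, ← Finset.sum_sdiff (Finset.subset_univ {y s}),
      Finset.sum_singleton]
    ring
  rw [← hC]
  simp only [sub_mul, Finset.sum_sub_distrib, mul_add, Finset.mul_sum]
  ring
end
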